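/- Let s be a seminorm on ℝ² such that 𝓘²_+(s) ≤ 𝓘²_+(s ∘ T) for every T ∈ SL₂(ℝ). Then s is √2-quasi-conformal, i.e., s(v) ≤ √2·s(w) for all v, w in the unit circle S¹. -/

import Mathlib

open MeasureTheory Metric

/-- `𝓘^p_+(s) = max{s(v)^p : v ∈ S^{n-1}}`, realized as the supremum over the unit sphere. -/
noncomputable def Iplus (n : ℕ) (p : ℝ) (s : Seminorm ℝ (EuclideanSpace ℝ (Fin n))) : ℝ :=
  ⨆ v : sphere (0 : EuclideanSpace ℝ (Fin n)) 1, (s v.1) ^ p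

namespace SqrtTwoQC

abbrev E2 := EuclideanSpace ℝ (Fin 2)

lemma sum_sq (x : E2) : (x 0)^2 + (x 1)^2 = ‖x‖^2 := by
  rw [EuclideanSpace.norm_eq, Real.sq_sqrt (by positivity)]
  simp [Fin.sum_univ_two, sq_abs]

lemma rpow_two' (a : ℝ) : a ^ (2:ℝ) = a^2 := by
  rw [show (2:ℝ) = ((2:ℕ):ℝ) by norm_num, Real.rpow_natCast]

instance : Nonempty (sphere (0 : E2) 1) :=
  ⟨⟨EuclideanSpace.single 0 1, by simp [mem_sphere_iff_norm]⟩⟩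

lemma s_bound (s : Seminorm ℝ E2) (u : E2) (hu : ‖u‖ = 1) :
    s u ≤ s (EuclideanSpace.single 0 1) + s (EuclideanSpace.single 1 1) := by
  have hd : u = u 0 • EuclideanSpace.single (0:Fin 2) (1:ℝ)
      + u 1 • EuclideanSpace.single (1:Fin 2) (1:ℝ) := by
    ext i
    fin_cases i <;> simp
  have husum : (u 0)^2 + (u 1)^2 = 1 := by rw [sum_sq, hu]; norm_num
  have h0 : |u 0| ≤ 1 := by nlinarith [sq_nonneg (u 1), abs_nonneg (u 0), sq_abs (u 0)]
  have h1 : |u 1| ≤ 1 := by nlinarith [sq_nonneg (u 0), abs_nonneg (u 1), sq_abs (u 1)]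
  calc s u ≤ s (u 0 • EuclideanSpace.single (0:Fin 2) (1:ℝ))
        + s (u 1 • EuclideanSpace.single (1:Fin 2) (1:ℝ)) := by
        nth_rewrite 1 [hd]
        exact map_add_le_add s _ _
    _ = |u 0| * s (EuclideanSpace.single 0 1) + |u 1| * s (EuclideanSpace.single 1 1) := by
        rw [map_smul_eq_mul, map_smul_eq_mul]; simp [Real.norm_eq_abs]
    _ ≤ _ := by
        nlinarith [apply_nonneg s (EuclideanSpace.single (0:Fin 2) (1:ℝ)),
          apply_nonneg s (EuclideanSpace.single (1:Fin 2) (1:ℝ)), abs_nonneg (u 0), abs_nonneg (u 1)]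

lemma bddabove (s : Seminorm ℝ E2) :
    BddAbove (Set.range fun v : sphere (0:E2) 1 => (s v.1) ^ (2:ℝ)) := by
  refine ⟨(s (EuclideanSpace.single 0 1) + s (EuclideanSpace.single 1 1))^2, ?_⟩
  rintro y ⟨⟨u, hu⟩, rfl⟩
  have hu1 : ‖u‖ = 1 := by simpa [mem_sphere_iff_norm] using hu
  simp only [rpow_two']
  have := s_bound s u hu1
  have := apply_nonneg s u
  nlinarith

lemma le_iplus (s : Seminorm ℝ E2) (u : E2) (hu : ‖u‖ = 1) : (s u)^2 ≤ Iplus 2 2 s := by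
  have := le_ciSup (bddabove s) (⟨u, by simpa [mem_sphere_iff_norm] using hu⟩ : sphere (0:E2) 1)
  rw [rpow_two'] at this
  exact this

lemma iplus_le (s : Seminorm ℝ E2) (B : ℝ) (hB : ∀ u : E2, ‖u‖ = 1 → (s u)^2 ≤ B) :
    Iplus 2 2 s ≤ B := by
  apply ciSup_le
  rintro ⟨u, hu⟩
  rw [rpow_two']
  exact hB u (by simpa [mem_sphere_iff_norm] using hu)

lemma s_le_sqrt (s : Seminorm ℝ E2) (x : E2) :
    s x ≤ Real.sqrt (Iplus 2 2 s) * ‖x‖ := by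
  rcases eq_or_ne x 0 with rfl | hx
  · simp
  · have hn : ‖x‖ ≠ 0 := norm_ne_zero_iff.2 hx
    have hu : ‖(‖x‖⁻¹ • x)‖ = 1 := norm_smul_inv_norm hx
    have h1 : (s (‖x‖⁻¹ • x))^2 ≤ Iplus 2 2 s := le_iplus s _ hu
    have h2 : s (‖x‖⁻¹ • x) ≤ Real.sqrt (Iplus 2 2 s) := by
      rw [show Real.sqrt (Iplus 2 2 s) = Real.sqrt (Iplus 2 2 s) from rfl]
      have := Real.sqrt_le_sqrt h1
      rwa [Real.sqrt_sq (apply_nonneg s _)] at this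
    have h3 : s (‖x‖⁻¹ • x) = ‖x‖⁻¹ * s x := by
      rw [map_smul_eq_mul]; simp [abs_of_nonneg (norm_nonneg x)]
    rw [h3] at h2
    calc s x = ‖x‖ * (‖x‖⁻¹ * s x) := by field_simp
      _ ≤ ‖x‖ * Real.sqrt (Iplus 2 2 s) := by
          exact mul_le_mul_of_nonneg_left h2 (norm_nonneg x)
      _ = _ := by ring
noncomputable def Tmap (a b : ℝ) (w : E2) : E2 →ₗ[ℝ] E2 where
  toFun x := a • x + (b * (x 0 * w 0 + x 1 * w 1)) • w
  map_add' x y := by ext i; simp; ring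
  map_smul' r x := by ext i; simp; ring

lemma Tmap_apply (a b : ℝ) (w x : E2) (i : Fin 2) :
    Tmap a b w x i = a * x i + (b * (x 0 * w 0 + x 1 * w 1)) * w i := by
  simp [Tmap]

lemma Tmap_det (a b : ℝ) (w : E2) (hw : (w 0)^2 + (w 1)^2 = 1) :
    LinearMap.det (Tmap a b w) = a^2 + a*b := by
  classical
  let bas := (EuclideanSpace.basisFun (Fin 2) ℝ).toBasis
  rw [← LinearMap.det_toMatrix bas, Matrix.det_fin_two]
  have hb : ∀ (j : Fin 2) (i : Fin 2),
      LinearMap.toMatrix bas bas (Tmap a b w) i j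
        = Tmap a b w (EuclideanSpace.single j 1) i := by
    intro j i
    rw [LinearMap.toMatrix_apply]
    simp [bas]
  rw [hb, hb, hb, hb]
  simp only [Tmap_apply]
  have h0 : (EuclideanSpace.single (0:Fin 2) (1:ℝ)) 0 = 1 := by simp
  have h1 : (EuclideanSpace.single (0:Fin 2) (1:ℝ)) 1 = 0 := by simp
  have h2 : (EuclideanSpace.single (1:Fin 2) (1:ℝ)) 0 = 0 := by simp
  have h3 : (EuclideanSpace.single (1:Fin 2) (1:ℝ)) 1 = 1 := by simp
  rw [h0, h1, h2, h3]
  linear_combination a*b*hw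

lemma keyineq (t Y S τ : ℝ) (ht0 : 0 ≤ t) (ht : t < 1/2)
    (hτ2 : τ^2 = t)
    (hY2' : Y^2 = 1 - S^2*(1-4*t^2)) :
    (1+2*t) * (Y + S*(2-4*t)*τ)^2 ≤ 1 + 6*t - 8*t^2 := by
  have hG2 : (S*(2-4*t)*τ)^2 = S^2 * (2-4*t)^2 * t := by rw [← hτ2]; ring
  rcases eq_or_lt_of_le ht0 with ht0' | htpos
  · have hτz : τ = 0 := by
      have h1 : τ^2 = 0 := by rw [hτ2, ← ht0']
      exact pow_eq_zero_iff (n := 2) (by norm_num) |>.1 h1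
    rw [hτz, ← ht0']
    nlinarith [sq_nonneg S]
  · have hapos : 0 < 4*t*(1-2*t) := by nlinarith
    have hcross : 2*((4*t*(1-2*t))*Y)*((1+2*t)*(S*(2-4*t)*τ))
        ≤ ((4*t*(1-2*t))*Y)^2 + ((1+2*t)*(S*(2-4*t)*τ))^2 := two_mul_le_add_sq _ _
    have e3 : (4*t*(1-2*t))*Y^2 + (1+2*t)*(S*(2-4*t)*τ)^2 = 4*t*(1-2*t) := by
      rw [hY2', hG2]; ring
    have main : (4*t*(1-2*t)) * ((1+2*t) * (Y + S*(2-4*t)*τ)^2)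
        ≤ (4*t*(1-2*t)) * (1 + 6*t - 8*t^2) := by
      calc (4*t*(1-2*t)) * ((1+2*t) * (Y + S*(2-4*t)*τ)^2)
          = (4*t*(1-2*t))*(1+2*t)*Y^2 + (4*t*(1-2*t))*(1+2*t)*(S*(2-4*t)*τ)^2
            + 2*((4*t*(1-2*t))*Y)*((1+2*t)*(S*(2-4*t)*τ)) := by ring
        _ ≤ (4*t*(1-2*t))*(1+2*t)*Y^2 + (4*t*(1-2*t))*(1+2*t)*(S*(2-4*t)*τ)^2
            + (((4*t*(1-2*t))*Y)^2 + ((1+2*t)*(S*(2-4*t)*τ))^2) := by linarith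
        _ = (4*t*(1-2*t) + (1+2*t))
            * ((4*t*(1-2*t))*Y^2 + (1+2*t)*(S*(2-4*t)*τ)^2) := by ring
        _ = (4*t*(1-2*t) + (1+2*t)) * (4*t*(1-2*t)) := by rw [e3]
        _ = (4*t*(1-2*t)) * (1 + 6*t - 8*t^2) := by ring
    exact le_of_mul_le_mul_left main hapos

set_option maxHeartbeats 1000000 in
lemma perpoint (s : Seminorm ℝ E2) (w u : E2) (t lam I : ℝ)
    (hwsum : (w 0)^2 + (w 1)^2 = 1) (husum : (u 0)^2 + (u 1)^2 = 1)
    (ht0 : 0 ≤ t) (ht : t < 1/2)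
    (hlam2 : lam^2 = 2 - 2*t) (hlampos : 0 < lam)
    (hIpos : 0 < I)
    (hsle : ∀ x : E2, s x ≤ Real.sqrt I * ‖x‖)
    (htI : (s w)^2 = t * I) :
    (s (Tmap (1/lam) (lam - 1/lam) w u))^2
      ≤ ((1 + 6*t - 8*t^2) / ((1+2*t)*(2-2*t))) * I := by
  have hlamne : lam ≠ 0 := ne_of_gt hlampos
  have hm0 : 0 ≤ s w := apply_nonneg s w
  have hσ2 : (u 0 * w 0 + u 1 * w 1)^2 ≤ 1 := by
    nlinarith [sq_nonneg (u 0 * w 1 - u 1 * w 0)]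
  -- abbreviations as plain local notation
  generalize hσdef : u 0 * w 0 + u 1 * w 1 = σ at hσ2
  have hdecomp : Tmap (1/lam) (lam - 1/lam) w u
      = (1/lam) • (u + (σ*(2*t-1)) • w) + (σ * (2 - 4*t) / lam) • w := by
    ext i
    rw [Tmap_apply]
    have hrhs : ((1/lam) • (u + (σ*(2*t-1)) • w) + (σ * (2 - 4*t) / lam) • w) i
        = (1/lam) * (u i + (σ*(2*t-1)) * w i) + (σ * (2 - 4*t) / lam) * w i := by simp; ring
    rw [hrhs, hσdef]
    field_simp
    linear_combination (σ * w i) * hlam2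
  have hY2 : ‖u + (σ*(2*t-1)) • w‖^2 = 1 + σ^2*(4*t^2-1) := by
    rw [← sum_sq]
    have hy0 : (u + (σ*(2*t-1)) • w) 0 = u 0 + (σ*(2*t-1)) * w 0 := by simp
    have hy1 : (u + (σ*(2*t-1)) • w) 1 = u 1 + (σ*(2*t-1)) * w 1 := by simp
    rw [hy0, hy1]
    linear_combination husum + (σ*(2*t-1))^2 * hwsum + (2*σ*(2*t-1)) * hσdef
  have hY0 : (0:ℝ) ≤ ‖u + (σ*(2*t-1)) • w‖ := norm_nonneg _
  -- seminorm estimate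
  have hm : s w = Real.sqrt t * Real.sqrt I := by
    rw [← Real.sqrt_mul ht0, ← htI, Real.sqrt_sq hm0]
  have hqabs : |σ * (2 - 4*t) / lam| = |σ| * (2-4*t) / lam := by
    rw [abs_div, abs_mul, abs_of_pos hlampos,
      abs_of_pos (by linarith : (0:ℝ) < 2 - 4*t)]
  have hs2 : s (Tmap (1/lam) (lam - 1/lam) w u)
      ≤ (Real.sqrt I / lam) * (‖u + (σ*(2*t-1)) • w‖ + |σ| * (2-4*t) * Real.sqrt t) := by
    calc s (Tmap (1/lam) (lam - 1/lam) w u)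
        = s ((1/lam) • (u + (σ*(2*t-1)) • w) + (σ * (2 - 4*t) / lam) • w) := by rw [hdecomp]
      _ ≤ s ((1/lam) • (u + (σ*(2*t-1)) • w)) + s ((σ * (2 - 4*t) / lam) • w) :=
          map_add_le_add s _ _
      _ = (1/lam) * s (u + (σ*(2*t-1)) • w) + (|σ| * (2-4*t) / lam) * s w := by
          rw [map_smul_eq_mul, map_smul_eq_mul, Real.norm_eq_abs, Real.norm_eq_abs,
            abs_of_pos (by positivity : (0:ℝ) < 1/lam), hqabs]
      _ ≤ (1/lam) * (Real.sqrt I * ‖u + (σ*(2*t-1)) • w‖)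
            + (|σ| * (2-4*t) / lam) * (Real.sqrt t * Real.sqrt I) := by
          have hb1 := hsle (u + (σ*(2*t-1)) • w)
          have h1 : (0:ℝ) ≤ 1/lam := by positivity
          have h2 : (0:ℝ) ≤ |σ| * (2-4*t) / lam := by
            have : (0:ℝ) ≤ |σ| := abs_nonneg σ
            have : (0:ℝ) ≤ 2-4*t := by linarith
            positivity
          rw [hm]
          exact add_le_add (mul_le_mul_of_nonneg_left hb1 h1) (le_refl _)
      _ = (Real.sqrt I / lam) * (‖u + (σ*(2*t-1)) • w‖ + |σ| * (2-4*t) * Real.sqrt t) := by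
          field_simp
  -- abstract the norms
  generalize hYdef : ‖u + (σ*(2*t-1)) • w‖ = Y at hY2 hY0 hs2
  generalize hSdef : |σ| = S at hs2
  have hS0 : (0:ℝ) ≤ S := hSdef ▸ abs_nonneg σ
  have hSsq : S^2 = σ^2 := hSdef ▸ sq_abs σ
  generalize hτdef : Real.sqrt t = τ at hs2 hm
  have hτ0 : (0:ℝ) ≤ τ := hτdef ▸ Real.sqrt_nonneg t
  have hτ2 : τ^2 = t := by rw [← hτdef]; exact Real.sq_sqrt ht0
  -- key algebraic inequality
  have hG0 : (0:ℝ) ≤ S * (2-4*t) * τ := by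
    apply mul_nonneg (mul_nonneg hS0 (by linarith)) hτ0
  have hY2' : Y^2 = 1 - S^2*(1-4*t^2) := by rw [hY2, hSsq]; ring
  have hkey : (1+2*t) * (Y + S*(2-4*t)*τ)^2 ≤ 1 + 6*t - 8*t^2 :=
    keyineq t Y S τ ht0 ht hτ2 hY2'
  -- finish
  have hsTnn : 0 ≤ s (Tmap (1/lam) (lam - 1/lam) w u) := apply_nonneg s _
  have hRnn : 0 ≤ (Real.sqrt I / lam) * (Y + S*(2-4*t)*τ) := by
    have h1 : (0:ℝ) ≤ Real.sqrt I / lam := by positivity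
    exact mul_nonneg h1 (by linarith)
  have hsq : (s (Tmap (1/lam) (lam - 1/lam) w u))^2
      ≤ (Real.sqrt I / lam)^2 * (Y + S*(2-4*t)*τ)^2 := by
    have := mul_le_mul hs2 hs2 hsTnn hRnn
    nlinarith [this]
  have hIin : (Real.sqrt I / lam)^2 = I / (2-2*t) := by
    rw [div_pow, Real.sq_sqrt (le_of_lt hIpos), hlam2]
  calc (s (Tmap (1/lam) (lam - 1/lam) w u))^2
      ≤ (Real.sqrt I / lam)^2 * (Y + S*(2-4*t)*τ)^2 := hsq
    _ = (I / (2-2*t)) * (Y + S*(2-4*t)*τ)^2 := by rw [hIin]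
    _ ≤ (I / (2-2*t)) * ((1 + 6*t - 8*t^2)/(1+2*t)) := by
        apply mul_le_mul_of_nonneg_left _ (div_nonneg (le_of_lt hIpos) (by linarith))
        rw [le_div_iff₀ (by linarith : (0:ℝ) < 1+2*t)]
        linarith [hkey]
    _ = ((1 + 6*t - 8*t^2) / ((1+2*t)*(2-2*t))) * I := by
        field_simp

end SqrtTwoQC

open SqrtTwoQC in
/-- Let `s` be a seminorm on `ℝ²` such that `𝓘²_+(s) ≤ 𝓘²_+(s ∘ T)` for every
`T ∈ SL₂(ℝ)` (i.e. every linear map of determinant `1`). Then `s` is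
`√2`-quasi-conformal: `s(v) ≤ √2·s(w)` for all `v, w` on the unit circle. -/
theorem sqrt_two_quasiconformal_of_Iplus_min (s : Seminorm ℝ (EuclideanSpace ℝ (Fin 2)))
    (h : ∀ T : EuclideanSpace ℝ (Fin 2) →ₗ[ℝ] EuclideanSpace ℝ (Fin 2),
      LinearMap.det T = 1 → Iplus 2 2 s ≤ Iplus 2 2 (s.comp T)) :
    ∀ v w : EuclideanSpace ℝ (Fin 2), ‖v‖ = 1 → ‖w‖ = 1 →
      s v ≤ Real.sqrt 2 * s w := by
  intro v w hv hw
  by_contra hcon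
  push_neg at hcon
  have hm0 : 0 ≤ s w := apply_nonneg s w
  have hsv0 : 0 ≤ s v := apply_nonneg s v
  have hsqrt2 : (Real.sqrt 2)^2 = 2 := Real.sq_sqrt (by norm_num)
  have h2 : 2 * (s w)^2 < (s v)^2 := by
    nlinarith [mul_nonneg (Real.sqrt_nonneg 2) hm0]
  have hvI : (s v)^2 ≤ Iplus 2 2 s := le_iplus s v hv
  have hIpos : 0 < Iplus 2 2 s := by nlinarith
  have hwsum : (w 0)^2 + (w 1)^2 = 1 := by rw [sum_sq, hw]; norm_num
  have ht0 : 0 ≤ (s w)^2 / Iplus 2 2 s := by positivity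
  have htI : (s w)^2 = ((s w)^2 / Iplus 2 2 s) * Iplus 2 2 s := by field_simp
  have ht : (s w)^2 / Iplus 2 2 s < 1/2 := by
    rw [div_lt_iff₀ hIpos]; linarith
  generalize htdef : (s w)^2 / Iplus 2 2 s = t at ht0 htI ht
  have hlam2 : (Real.sqrt (2 - 2*t))^2 = 2 - 2*t := Real.sq_sqrt (by linarith)
  have hlampos : 0 < Real.sqrt (2 - 2*t) := Real.sqrt_pos.2 (by linarith)
  generalize hlamdef : Real.sqrt (2 - 2*t) = lam at hlam2 hlampos
  have hlamne : lam ≠ 0 := ne_of_gt hlampos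
  have hdet : LinearMap.det (Tmap (1/lam) (lam - 1/lam) w) = 1 := by
    rw [Tmap_det _ _ _ hwsum]
    field_simp
    ring
  have hIT : Iplus 2 2 s ≤ Iplus 2 2 (s.comp (Tmap (1/lam) (lam - 1/lam) w)) :=
    h _ hdet
  have hden : 0 < (1+2*t)*(2-2*t) := by nlinarith
  have claim : ∀ u : E2, ‖u‖ = 1 → (s.comp (Tmap (1/lam) (lam - 1/lam) w) u)^2
      ≤ ((1 + 6*t - 8*t^2) / ((1+2*t)*(2-2*t))) * Iplus 2 2 s := by
    intro u hu
    have husum : (u 0)^2 + (u 1)^2 = 1 := by rw [sum_sq, hu]; norm_num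
    exact perpoint s w u t lam (Iplus 2 2 s) hwsum husum ht0 ht hlam2 hlampos hIpos
      (s_le_sqrt s) htI
  have hfin : Iplus 2 2 (s.comp (Tmap (1/lam) (lam - 1/lam) w))
      ≤ ((1 + 6*t - 8*t^2) / ((1+2*t)*(2-2*t))) * Iplus 2 2 s := iplus_le _ _ claim
  have hlt : ((1 + 6*t - 8*t^2) / ((1+2*t)*(2-2*t))) * Iplus 2 2 s < Iplus 2 2 s := by
    have hc1 : (1 + 6*t - 8*t^2) / ((1+2*t)*(2-2*t)) < 1 := by
      rw [div_lt_one hden]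
      nlinarith [sq_nonneg (1-2*t)]
    nlinarith
  linarith [le_trans hIT hfin]
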